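/- arXiv:0710.0977 — 4 statements merged into one kernel-verified Lean document; each statement's English description precedes it below -/
import Mathlib

section
/- Let G be a Schwartz function, n, m ∈ ℕ, ε > 0, and G_ε(x) = ε⁻¹G(ε⁻¹x). Writing φ_{n,m}(x) = x^n φ^(m)(x), one has for every Schwartz φ: x^n (G_ε * φ)^(m)(x) = Σ_{k=0}^{n} C(n,k) ε^k (D_ε¹(G_{k,0}) * φ_{n-k,m})(x), where D_ε¹h(x) = ε⁻¹h(ε⁻¹x) and C(n,k) is the binomial coefficient. -/
open MeasureTheory SchwartzMap Complex

lemma conv_integrable (g : ℝ → ℂ) (hg : Integrable g) (ψ : 𝓢(ℝ, ℂ)) (y : ℝ) :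
    Integrable (fun t : ℝ => g t * ψ (y - t)) := by
  refine (hg.norm.mul_const (SchwartzMap.seminorm ℝ 0 0 ψ)).mono'
    (hg.aestronglyMeasurable.mul
      ((ψ.continuous.comp (continuous_const.sub continuous_id)).aestronglyMeasurable)) ?_
  filter_upwards with t
  rw [norm_mul]
  exact mul_le_mul_of_nonneg_left (ψ.norm_le_seminorm ℝ _) (norm_nonneg _)

lemma conv_hasDerivAt (g : ℝ → ℂ) (hg : Integrable g) (ψ : 𝓢(ℝ, ℂ)) (x : ℝ) :
    HasDerivAt (fun y : ℝ => ∫ t : ℝ, g t * ψ (y - t))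
      (∫ t : ℝ, g t * (SchwartzMap.derivCLM ℝ ℂ ψ) (x - t)) x := by
  have hψ' := SchwartzMap.derivCLM ℝ ℂ ψ
  refine (hasDerivAt_integral_of_dominated_loc_of_deriv_le (F := fun y t => g t * ψ (y - t))
    (F' := fun y t => g t * (SchwartzMap.derivCLM ℝ ℂ ψ) (y - t))
    (bound := fun t => ‖g t‖ * SchwartzMap.seminorm ℝ 0 0 (SchwartzMap.derivCLM ℝ ℂ ψ))
    (Metric.ball_mem_nhds x one_pos) ?_ (conv_integrable g hg ψ x) ?_ ?_ ?_ ?_).2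
  · filter_upwards with y
    exact hg.aestronglyMeasurable.mul
      ((ψ.continuous.comp (continuous_const.sub continuous_id)).aestronglyMeasurable)
  · exact hg.aestronglyMeasurable.mul
      (((SchwartzMap.derivCLM ℝ ℂ ψ).continuous.comp
        (continuous_const.sub continuous_id)).aestronglyMeasurable)
  · filter_upwards with t
    intro y _
    rw [norm_mul]
    exact mul_le_mul_of_nonneg_left
      ((SchwartzMap.derivCLM ℝ ℂ ψ).norm_le_seminorm ℝ _) (norm_nonneg _)
  · exact hg.norm.mul_const _
  · filter_upwards with t
    intro y _
    have h1 : HasDerivAt (fun y : ℝ => ψ (y - t)) (deriv (⇑ψ) (y - t)) y :=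
      HasDerivAt.comp_sub_const y t ((ψ.differentiable (y - t)).hasDerivAt)
    simpa [SchwartzMap.derivCLM_apply] using h1.const_mul (g t)

lemma conv_iteratedDeriv (g : ℝ → ℂ) (hg : Integrable g) (m : ℕ) :
    ∀ (ψ : 𝓢(ℝ, ℂ)) (x : ℝ),
      iteratedDeriv m (fun y : ℝ => ∫ t : ℝ, g t * ψ (y - t)) x
        = ∫ t : ℝ, g t * iteratedDeriv m (⇑ψ) (x - t) := by
  induction m with
  | zero => intro ψ x; simp
  | succ m ih =>
    intro ψ x
    rw [iteratedDeriv_succ']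
    have hd : deriv (fun y : ℝ => ∫ t : ℝ, g t * ψ (y - t))
        = fun y : ℝ => ∫ t : ℝ, g t * (SchwartzMap.derivCLM ℝ ℂ ψ) (y - t) :=
      funext fun y => (conv_hasDerivAt g hg ψ y).deriv
    rw [hd, ih (SchwartzMap.derivCLM ℝ ℂ ψ)]
    have : deriv (⇑ψ) = ⇑(SchwartzMap.derivCLM ℝ ℂ ψ) :=
      funext fun z => (SchwartzMap.derivCLM_apply ℝ ψ z).symm
    rw [iteratedDeriv_succ', this]

lemma iteratedDeriv_schwartz (φ : 𝓢(ℝ, ℂ)) (m : ℕ) :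
    ∃ ψ : 𝓢(ℝ, ℂ), ⇑ψ = iteratedDeriv m (⇑φ) := by
  induction m with
  | zero => exact ⟨φ, by simp⟩
  | succ m ih =>
    obtain ⟨ψ, hψ⟩ := ih
    exact ⟨SchwartzMap.derivCLM ℝ ℂ ψ, by
      rw [iteratedDeriv_succ, ← hψ]
      exact funext fun z => SchwartzMap.derivCLM_apply ℝ ψ z⟩

/-- for Schwartz `G, φ`, `ε > 0`, with `G_ε(x) = ε⁻¹G(ε⁻¹x)`,
`φ_{n,m}(x) = x^n φ^{(m)}(x)` and `G_{k,0}(t) = t^k G(t)`, one has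
`x^n (G_ε * φ)^{(m)}(x) = ∑_{k=0}^n C(n,k) ε^k (D_ε¹(G_{k,0}) * φ_{n-k,m})(x)`. -/
theorem conv_moment_expansion
    (G φ : 𝓢(ℝ, ℂ)) (n m : ℕ) (ε : ℝ) (hε : 0 < ε) (x : ℝ) :
    (x : ℂ) ^ n *
        iteratedDeriv m (fun y : ℝ => ∫ t : ℝ, (ε⁻¹ : ℂ) * G (ε⁻¹ * t) * φ (y - t)) x
      = ∑ k ∈ Finset.range (n + 1),
          (n.choose k : ℂ) * (ε : ℂ) ^ k *
            ∫ t : ℝ, ((ε⁻¹ : ℂ) * (((ε⁻¹ * t : ℝ) : ℂ) ^ k * G (ε⁻¹ * t))) *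
              (((x - t : ℝ) : ℂ) ^ (n - k) * iteratedDeriv m (fun y : ℝ => φ y) (x - t)) := by
  have hε' : ε⁻¹ ≠ 0 := by positivity
  have hεc : (ε : ℂ) ≠ 0 := by exact_mod_cast hε.ne'
  set g : ℝ → ℂ := fun t => (ε⁻¹ : ℂ) * G (ε⁻¹ * t) with hgdef
  have hg : Integrable g := (G.integrable.comp_mul_left' hε').const_mul _
  obtain ⟨ψ, hψ⟩ := iteratedDeriv_schwartz φ m
  -- integrability of fun t => ‖t‖^k * ‖g t‖
  have hgk : ∀ k : ℕ, Integrable (fun t : ℝ => ‖t‖ ^ k * ‖g t‖) := by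
    intro k
    have h1 : Integrable (fun t : ℝ => ‖t‖ ^ k * ‖G t‖) := G.integrable_pow_mul volume k
    have h2 := (h1.comp_mul_left' hε').const_mul (ε ^ k * ε⁻¹)
    refine h2.congr ?_
    filter_upwards with t
    have : ‖(ε⁻¹ * t : ℝ)‖ = ε⁻¹ * ‖t‖ := by
      rw [norm_mul, Real.norm_eq_abs ε⁻¹, abs_of_pos (by positivity)]
    rw [hgdef]
    simp only [norm_mul, this, mul_pow, norm_inv, Complex.norm_real,
      Real.norm_eq_abs, abs_of_pos hε]
    field_simp
    have hk : ε ^ k * ε⁻¹ ^ k = 1 := by rw [← mul_pow, mul_inv_cancel₀ hε.ne', one_pow]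
    rw [one_div, hk, one_mul]
  -- integrability of each term
  have hterm : ∀ k : ℕ, Integrable (fun t : ℝ =>
      (n.choose k : ℂ) * (t : ℂ) ^ k * ((x - t : ℝ) : ℂ) ^ (n - k) * (g t * ψ (x - t))) := by
    intro k
    refine ((hgk k).const_mul ((n.choose k : ℝ) * SchwartzMap.seminorm ℝ (n - k) 0 ψ)).mono'
      ?_ ?_
    · apply AEStronglyMeasurable.mul
      apply AEStronglyMeasurable.mul
      · exact (Continuous.aestronglyMeasurable (by continuity))
      · exact (Continuous.aestronglyMeasurable (by continuity))
      exact hg.aestronglyMeasurable.mul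
        ((ψ.continuous.comp (continuous_const.sub continuous_id)).aestronglyMeasurable)
    · filter_upwards with t
      have hb : ‖(x - t : ℝ)‖ ^ (n - k) * ‖ψ (x - t)‖ ≤ SchwartzMap.seminorm ℝ (n - k) 0 ψ :=
        ψ.norm_pow_mul_le_seminorm ℝ (n - k) (x - t)
      have e1 : ‖(t : ℂ)‖ = ‖t‖ := Complex.norm_real t
      have e2 : ‖((x - t : ℝ) : ℂ)‖ = ‖(x - t : ℝ)‖ := Complex.norm_real _
      have e3 : ‖(n.choose k : ℂ)‖ = (n.choose k : ℝ) := by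
        simp [Complex.norm_natCast]
      calc ‖(n.choose k : ℂ) * (t : ℂ) ^ k * ((x - t : ℝ) : ℂ) ^ (n - k) * (g t * ψ (x - t))‖
          = (n.choose k : ℝ) * (‖t‖ ^ k * ‖g t‖) *
              (‖(x - t : ℝ)‖ ^ (n - k) * ‖ψ (x - t)‖) := by
            simp only [norm_mul, norm_pow]; rw [e1, e2, e3]; ring
        _ ≤ (n.choose k : ℝ) * (‖t‖ ^ k * ‖g t‖) * SchwartzMap.seminorm ℝ (n - k) 0 ψ := by
            apply mul_le_mul_of_nonneg_left hb (by positivity)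
        _ = (n.choose k : ℝ) * SchwartzMap.seminorm ℝ (n - k) 0 ψ * (‖t‖ ^ k * ‖g t‖) := by ring
  -- rewrite LHS
  rw [conv_iteratedDeriv g hg m φ x]
  simp only [← hψ]
  rw [← MeasureTheory.integral_const_mul]
  -- rewrite RHS terms
  have hR : ∀ k ∈ Finset.range (n + 1),
      (n.choose k : ℂ) * (ε : ℂ) ^ k *
          ∫ t : ℝ, ((ε⁻¹ : ℂ) * (((ε⁻¹ * t : ℝ) : ℂ) ^ k * G (ε⁻¹ * t))) *
            (((x - t : ℝ) : ℂ) ^ (n - k) * ψ (x - t))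
        = ∫ t : ℝ, (n.choose k : ℂ) * (t : ℂ) ^ k * ((x - t : ℝ) : ℂ) ^ (n - k)
            * (g t * ψ (x - t)) := by
    intro k _
    rw [← MeasureTheory.integral_const_mul]
    congr 1
    funext t
    rw [hgdef]
    push_cast
    field_simp
    have hk : (ε : ℂ) ^ k * (ε : ℂ)⁻¹ ^ k = 1 := by rw [← mul_pow, mul_inv_cancel₀ hεc, one_pow]
    linear_combination ((n.choose k : ℂ) * (t : ℂ) ^ k * G (t / ε) * ψ (x - t) *
      (-(t : ℂ) + x) ^ (n - k)) * hk
  rw [Finset.sum_congr rfl hR, ← MeasureTheory.integral_finset_sum _ (fun k _ => hterm k)]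
  congr 1
  funext t
  have hbin : ∑ k ∈ Finset.range (n + 1),
      (n.choose k : ℂ) * (t : ℂ) ^ k * ((x - t : ℝ) : ℂ) ^ (n - k) = (x : ℂ) ^ n := by
    have h := add_pow (t : ℂ) (((x - t : ℝ)) : ℂ) n
    have h2 : ((t : ℂ) + ((x - t : ℝ) : ℂ)) = (x : ℂ) := by push_cast; ring
    rw [h2] at h
    rw [h]
    exact Finset.sum_congr rfl (fun k _ => by ring)
  rw [← Finset.sum_mul, hbin, mul_assoc]
end

section
/- Let K ∈ L^{p'}(ℝ), α, β ∈ ℝ with α ≠ β, and 1 ≤ p ≤ ∞. Then for all f, g ∈ L^p(ℝ), the function H(f,g)(x) = ∫ f(x-αt) g(x-βt) K(t) dt satisfies ‖H(f,g)‖_p ≤ |α-β|^{-1/p} ‖f‖_p ‖g‖_p ‖K‖_{p'}. -/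
open MeasureTheory ENNReal


lemma lint_scale (ψ : ℝ → ℝ≥0∞) (hψ : Measurable ψ) {c : ℝ} (hc : c ≠ 0) :
    ∫⁻ t : ℝ, ψ (c * t) = ENNReal.ofReal |c|⁻¹ * ∫⁻ s, ψ s := by
  rw [← lintegral_map hψ (measurable_const_mul c), Real.map_volume_mul_left hc,
    lintegral_smul_measure, abs_inv, smul_eq_mul]

lemma ae_ae_comp (α : ℝ) {S : Set ℝ} (hS : volume S = 0) :
    ∀ᵐ x : ℝ, ∀ᵐ t : ℝ, x - α * t ∉ S := by
  rcases eq_or_ne α 0 with rfl | hα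
  · filter_upwards [measure_eq_zero_iff_ae_notMem.mp hS] with x hx
    filter_upwards with t
    simpa using hx
  · refine Filter.Eventually.of_forall fun x => ?_
    have h2 : Measure.QuasiMeasurePreserving (fun t : ℝ => α * t) volume volume :=
      ⟨measurable_const_mul α, by
        rw [Real.map_volume_mul_left hα]; exact Measure.smul_absolutelyContinuous⟩
    have h1 : Measure.QuasiMeasurePreserving (fun s : ℝ => x - s) volume volume :=
      (Measure.measurePreserving_sub_left volume x).quasiMeasurePreserving
    have qmp : Measure.QuasiMeasurePreserving (fun t : ℝ => x - α * t) volume volume :=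
      h1.comp h2
    have := measure_eq_zero_iff_ae_notMem.mp (qmp.preimage_null hS)
    simpa using this

lemma bht_core (φ ψ : ℝ → ℝ≥0∞) (hφ : Measurable φ) (hψ : Measurable ψ)
    {α β : ℝ} (hab : α ≠ β) :
    ∫⁻ x : ℝ, ∫⁻ t : ℝ, φ (x - α * t) * ψ (x - β * t) =
      ENNReal.ofReal |α - β|⁻¹ * ((∫⁻ y, φ y) * (∫⁻ y, ψ y)) := by
  have hc : α - β ≠ 0 := sub_ne_zero.mpr hab
  have m1 : Measurable fun q : ℝ × ℝ => φ (q.1 - α * q.2) * ψ (q.1 - β * q.2) :=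
    ((hφ.comp (measurable_fst.sub (measurable_snd.const_mul α)))).mul
      ((hψ.comp (measurable_fst.sub (measurable_snd.const_mul β))))
  rw [lintegral_lintegral_swap m1.aemeasurable]
  have step1 : ∀ t : ℝ, ∫⁻ x : ℝ, φ (x - α * t) * ψ (x - β * t) =
      ∫⁻ x : ℝ, φ x * ψ (x + (α - β) * t) := by
    intro t
    have := lintegral_add_right_eq_self (μ := volume)
      (fun x : ℝ => φ (x - α * t) * ψ (x - β * t)) (α * t)
    rw [← this]
    congr 1
    ext x
    have e1 : x + α * t - α * t = x := by ring
    have e2 : x + α * t - β * t = x + (α - β) * t := by ring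
    rw [e1, e2]
  simp_rw [step1]
  have m2 : Measurable fun q : ℝ × ℝ => φ q.2 * ψ (q.2 + (α - β) * q.1) :=
    (hφ.comp measurable_snd).mul
      (hψ.comp (measurable_snd.add (measurable_fst.const_mul (α - β))))
  rw [lintegral_lintegral_swap m2.aemeasurable]
  have step2 : ∀ x : ℝ, ∫⁻ t : ℝ, φ x * ψ (x + (α - β) * t) =
      φ x * (ENNReal.ofReal |α - β|⁻¹ * ∫⁻ s, ψ s) := by
    intro x
    rw [lintegral_const_mul (φ x)
      (show Measurable fun t : ℝ => ψ (x + (α - β) * t) from hψ.comp (by fun_prop))]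
    congr 1
    have h2 := lint_scale (fun s => ψ (x + s)) (hψ.comp (by fun_prop)) hc
    rw [show (fun t : ℝ => ψ (x + (α - β) * t)) = fun t : ℝ => (fun s => ψ (x + s)) ((α - β) * t) from rfl]
    rw [h2, lintegral_add_left_eq_self (μ := volume) (fun s => ψ s) x]
  simp_rw [step2]
  rw [lintegral_mul_const _ hφ]
  ring

theorem bht_aux (p p' : ℝ≥0∞) (hp : 1 ≤ p) (hpp' : p⁻¹ + p'⁻¹ = 1)
    (α β : ℝ) (hαβ : α ≠ β) (K f g : ℝ → ℂ)
    (hKm : Measurable K) (hfm : Measurable f) (hgm : Measurable g)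
    (hK : MemLp K p' volume) :
    eLpNorm (fun x : ℝ => ∫ t : ℝ, f (x - α * t) * g (x - β * t) * K t) p volume
      ≤ ENNReal.ofReal (|α - β| ^ (-(1 / p.toReal))) *
          eLpNorm f p volume * eLpNorm g p volume * eLpNorm K p' volume := by
  have habs : (0:ℝ) < |α - β| := abs_pos.mpr (sub_ne_zero.mpr hαβ)
  have hκm : Measurable fun t : ℝ => (‖K t‖₊ : ℝ≥0∞) := hKm.nnnorm.coe_nnreal_ennreal
  have hpt : ∀ x : ℝ, (‖∫ t : ℝ, f (x - α * t) * g (x - β * t) * K t‖₊ : ℝ≥0∞)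
      ≤ ∫⁻ t, ((‖f (x - α * t)‖₊ : ℝ≥0∞) * ‖g (x - β * t)‖₊) * ‖K t‖₊ := by
    intro x
    refine (enorm_integral_le_lintegral_enorm _).trans (le_of_eq ?_)
    refine lintegral_congr fun t => ?_
    simp [nnnorm_mul, ENNReal.coe_mul]
    rfl
  rcases eq_or_ne p ∞ with rfl | hp_top
  · -- p = ∞, p' = 1
    have hp'1 : p' = 1 := by
      have h1 : p'⁻¹ = 1 := by simpa using hpp'
      simpa using congrArg (·⁻¹) h1
    subst hp'1
    have hcoef : ENNReal.ofReal (|α - β| ^ (-(1 / (⊤:ℝ≥0∞).toReal))) = 1 := by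
      norm_num
    rw [hcoef, one_mul, eLpNorm_exponent_top, eLpNorm_exponent_top, eLpNorm_exponent_top]
    set Mf := eLpNormEssSup f volume with hMf
    set Mg := eLpNormEssSup g volume with hMg
    have haef : ∀ᵐ x : ℝ, ∀ᵐ t : ℝ,
        x - α * t ∉ {y : ℝ | ¬ (‖f y‖₊ : ℝ≥0∞) ≤ Mf} :=
      ae_ae_comp α (ae_iff.mp (enorm_ae_le_eLpNormEssSup f volume))
    have haeg : ∀ᵐ x : ℝ, ∀ᵐ t : ℝ,
        x - β * t ∉ {y : ℝ | ¬ (‖g y‖₊ : ℝ≥0∞) ≤ Mg} :=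
      ae_ae_comp β (ae_iff.mp (enorm_ae_le_eLpNormEssSup g volume))
    unfold eLpNormEssSup
    refine essSup_le_of_ae_le _ ?_
    filter_upwards [haef, haeg] with x hxf hxg
    refine (hpt x).trans ?_
    calc ∫⁻ t, ((‖f (x - α * t)‖₊ : ℝ≥0∞) * ‖g (x - β * t)‖₊) * ‖K t‖₊
        ≤ ∫⁻ t, (Mf * Mg) * ‖K t‖₊ := by
          refine lintegral_mono_ae ?_
          filter_upwards [hxf, hxg] with t h1 h2
          exact mul_le_mul' (mul_le_mul' (not_not.mp h1) (not_not.mp h2)) le_rfl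
      _ = Mf * Mg * ∫⁻ t, (‖K t‖₊ : ℝ≥0∞) := lintegral_const_mul _ hκm
      _ = Mf * Mg * eLpNorm K 1 volume := by rw [eLpNorm_one_eq_lintegral_enorm]; rfl
  · have hp0 : p ≠ 0 := (lt_of_lt_of_le zero_lt_one hp).ne'
    set q := p.toReal with hqdef
    have hqpos : 0 < q := ENNReal.toReal_pos hp0 hp_top
    have hq0 : q ≠ 0 := hqpos.ne'
    set N := eLpNorm K p' volume with hNdef
    have hN : N ≠ ∞ := hK.2.ne
    have key : ∀ x : ℝ, (‖∫ t : ℝ, f (x - α * t) * g (x - β * t) * K t‖₊ : ℝ≥0∞) ^ q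
        ≤ (∫⁻ t, ((‖f (x - α * t)‖₊ : ℝ≥0∞) ^ q) * ((‖g (x - β * t)‖₊ : ℝ≥0∞) ^ q)) * N ^ q := by
      intro x
      have hΦm : Measurable fun t : ℝ => (‖f (x - α * t)‖₊ : ℝ≥0∞) * ‖g (x - β * t)‖₊ := by
        fun_prop
      rcases eq_or_ne p' ∞ with rfl | hp'top
      · have hp1 : p = 1 := by
          have h1 : p⁻¹ = 1 := by simpa using hpp'
          simpa using congrArg (·⁻¹) h1
        have hq1 : q = 1 := by rw [hqdef, hp1]; simp
        rw [hq1]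
        simp only [ENNReal.rpow_one]
        refine (hpt x).trans ?_
        have hκ : ∀ᵐ t : ℝ, (‖K t‖₊ : ℝ≥0∞) ≤ N := by
          rw [hNdef, eLpNorm_exponent_top]
          exact enorm_ae_le_eLpNormEssSup K volume
        calc ∫⁻ t, ((‖f (x - α * t)‖₊ : ℝ≥0∞) * ‖g (x - β * t)‖₊) * ‖K t‖₊
            ≤ ∫⁻ t, ((‖f (x - α * t)‖₊ : ℝ≥0∞) * ‖g (x - β * t)‖₊) * N :=
              lintegral_mono_ae (hκ.mono fun t ht => mul_le_mul' le_rfl ht)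
          _ = (∫⁻ t, (‖f (x - α * t)‖₊ : ℝ≥0∞) * ‖g (x - β * t)‖₊) * N :=
              lintegral_mul_const' N _ hN
      · have hp'0 : p' ≠ 0 := by
          rintro rfl
          simp at hpp'
        have hp1 : p ≠ 1 := by
          rintro rfl
          rw [inv_one] at hpp'
          have h0 : p'⁻¹ = 0 :=
            (ENNReal.add_right_inj ENNReal.one_ne_top).mp (by rw [add_zero]; exact hpp')
          exact hp'top (ENNReal.inv_eq_zero.mp h0)
        have conj : q.HolderConjugate p'.toReal := by
          refine Real.holderConjugate_iff.mpr ⟨?_, ?_⟩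
          · have h1p : 1 < p := lt_of_le_of_ne hp (Ne.symm hp1)
            have := (ENNReal.toReal_lt_toReal (by simp) hp_top).mpr h1p
            simpa using this
          · have h := congrArg ENNReal.toReal hpp'
            rw [ENNReal.toReal_add (ENNReal.inv_ne_top.mpr hp0) (ENNReal.inv_ne_top.mpr hp'0),
              ENNReal.toReal_inv, ENNReal.toReal_inv] at h
            simpa using h
        have holder := ENNReal.lintegral_mul_le_Lp_mul_Lq volume conj hΦm.aemeasurable
          hκm.aemeasurable
        have hNeq : (∫⁻ t, (‖K t‖₊ : ℝ≥0∞) ^ p'.toReal) ^ (1 / p'.toReal) = N := by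
          rw [hNdef, eLpNorm_eq_lintegral_rpow_enorm_toReal hp'0 hp'top]; rfl
        have h1 : (‖∫ t : ℝ, f (x - α * t) * g (x - β * t) * K t‖₊ : ℝ≥0∞)
            ≤ (∫⁻ t, ((‖f (x - α * t)‖₊ : ℝ≥0∞) * ‖g (x - β * t)‖₊) ^ q) ^ (1 / q) * N := by
          refine (hpt x).trans (le_trans (le_of_eq ?_) (holder.trans (by rw [hNeq])))
          rfl
        calc (‖∫ t : ℝ, f (x - α * t) * g (x - β * t) * K t‖₊ : ℝ≥0∞) ^ q
            ≤ ((∫⁻ t, ((‖f (x - α * t)‖₊ : ℝ≥0∞) * ‖g (x - β * t)‖₊) ^ q) ^ (1 / q) * N) ^ q :=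
              ENNReal.rpow_le_rpow h1 hqpos.le
          _ = (∫⁻ t, ((‖f (x - α * t)‖₊ : ℝ≥0∞) * ‖g (x - β * t)‖₊) ^ q) * N ^ q := by
              rw [ENNReal.mul_rpow_of_nonneg _ _ hqpos.le, ← ENNReal.rpow_mul,
                one_div, inv_mul_cancel₀ hq0, ENNReal.rpow_one]
          _ = (∫⁻ t, ((‖f (x - α * t)‖₊ : ℝ≥0∞) ^ q) * ((‖g (x - β * t)‖₊ : ℝ≥0∞) ^ q)) * N ^ q := by
              congr 1
              exact lintegral_congr fun t => ENNReal.mul_rpow_of_nonneg _ _ hqpos.le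
    calc eLpNorm (fun x : ℝ => ∫ t : ℝ, f (x - α * t) * g (x - β * t) * K t) p volume
        = (∫⁻ x, (‖∫ t : ℝ, f (x - α * t) * g (x - β * t) * K t‖₊ : ℝ≥0∞) ^ q) ^ (1 / q) :=
          eLpNorm_eq_lintegral_rpow_enorm_toReal hp0 hp_top
      _ ≤ ((∫⁻ x, ∫⁻ t, ((‖f (x - α * t)‖₊ : ℝ≥0∞) ^ q) * ((‖g (x - β * t)‖₊ : ℝ≥0∞) ^ q))
            * N ^ q) ^ (1 / q) := by
          refine ENNReal.rpow_le_rpow ?_ (by positivity)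
          rw [← lintegral_mul_const' (N ^ q) _ (ENNReal.rpow_ne_top_of_nonneg hqpos.le hN)]
          exact lintegral_mono key
      _ = (ENNReal.ofReal |α - β|⁻¹ *
            ((∫⁻ y, (‖f y‖₊ : ℝ≥0∞) ^ q) * (∫⁻ y, (‖g y‖₊ : ℝ≥0∞) ^ q)) * N ^ q) ^ (1 / q) := by
          rw [bht_core (fun y => (‖f y‖₊ : ℝ≥0∞) ^ q) (fun y => (‖g y‖₊ : ℝ≥0∞) ^ q)
            (by fun_prop) (by fun_prop) hαβ]
      _ = ENNReal.ofReal (|α - β| ^ (-(1 / q))) * eLpNorm f p volume * eLpNorm g p volume * N := by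
          rw [eLpNorm_eq_lintegral_rpow_enorm_toReal hp0 hp_top,
            eLpNorm_eq_lintegral_rpow_enorm_toReal hp0 hp_top]
          simp only [enorm_eq_nnnorm, ← hqdef]
          rw [ENNReal.mul_rpow_of_nonneg _ _ (by positivity),
            ENNReal.mul_rpow_of_nonneg _ _ (by positivity),
            ENNReal.mul_rpow_of_nonneg _ _ (by positivity)]
          rw [← ENNReal.rpow_mul N, mul_one_div_cancel hq0, ENNReal.rpow_one]
          rw [ENNReal.ofReal_rpow_of_pos (inv_pos.mpr habs), Real.inv_rpow habs.le,
            ← Real.rpow_neg habs.le]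
          ring

/-- for `K ∈ L^{p'}`, `α ≠ β`, `1 ≤ p ≤ ∞`, and `f, g ∈ L^p`,
`‖∫ f(x-αt)g(x-βt)K(t)dt‖_p ≤ |α-β|^{-1/p} ‖f‖_p ‖g‖_p ‖K‖_{p'}`. -/
theorem bht_bound_ab
    (p p' : ℝ≥0∞) (hp : 1 ≤ p) (hpp' : p⁻¹ + p'⁻¹ = 1)
    (α β : ℝ) (hαβ : α ≠ β) (K f g : ℝ → ℂ)
    (hK : MemLp K p' volume) (hf : MemLp f p volume) (hg : MemLp g p volume) :
    eLpNorm (fun x : ℝ => ∫ t : ℝ, f (x - α * t) * g (x - β * t) * K t) p volume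
      ≤ ENNReal.ofReal (|α - β| ^ (-(1 / p.toReal))) *
          eLpNorm f p volume * eLpNorm g p volume * eLpNorm K p' volume := by
  set f' := hf.1.mk f with hf'def
  set g' := hg.1.mk g with hg'def
  set K' := hK.1.mk K with hK'def
  have hff' : f =ᵐ[volume] f' := hf.1.ae_eq_mk
  have hgg' : g =ᵐ[volume] g' := hg.1.ae_eq_mk
  have hKK' : K =ᵐ[volume] K' := hK.1.ae_eq_mk
  have hf'm : Measurable f' := hf.1.stronglyMeasurable_mk.measurable
  have hg'm : Measurable g' := hg.1.stronglyMeasurable_mk.measurable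
  have hK'm : Measurable K' := hK.1.stronglyMeasurable_mk.measurable
  have hK' : MemLp K' p' volume := hK.ae_eq hKK'
  have hHeq : (fun x : ℝ => ∫ t : ℝ, f (x - α * t) * g (x - β * t) * K t)
      =ᵐ[volume] (fun x : ℝ => ∫ t : ℝ, f' (x - α * t) * g' (x - β * t) * K' t) := by
    have hA := ae_ae_comp α (S := {y | ¬ f y = f' y}) (ae_iff.mp hff')
    have hB := ae_ae_comp β (S := {y | ¬ g y = g' y}) (ae_iff.mp hgg')
    filter_upwards [hA, hB] with x hxA hxB
    refine integral_congr_ae ?_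
    filter_upwards [hxA, hxB, hKK'] with t h1 h2 h3
    simp only [Set.mem_setOf_eq, not_not] at h1 h2
    rw [h1, h2, h3]
  rw [eLpNorm_congr_ae hHeq, eLpNorm_congr_ae hff', eLpNorm_congr_ae hgg',
    eLpNorm_congr_ae hKK']
  exact bht_aux p p' hp hpp' α β hαβ K' f' g' hK'm hf'm hg'm hK'
end

section
/- Let α, β ∈ ℝ with α, β ≠ 0 and α ≠ β, and let 1 ≤ p₀, p₁, p₂, p₃ with 1/p₁ + 1/p₂ + 1/p₀ = 1 + 1/p₃. Then for K ∈ L^{p₀}(ℝ), the bilinear operator H(f,g)(x) = ∫ f(x-αt)g(x-βt)K(t)dt is bounded from L^{p₁}(ℝ) × L^{p₂}(ℝ) to L^{p₃}(ℝ): there is a constant C depending only on α, β, p₀, p₁, p₂ with ‖H(f,g)‖_{p₃} ≤ C ‖K‖_{p₀} ‖f‖_{p₁} ‖g‖_{p₂}. -/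
open MeasureTheory ENNReal



lemma lint_affine (ψ : ℝ → ℝ≥0∞) (hψ : Measurable ψ) {c : ℝ} (hc : c ≠ 0) (x : ℝ) :
    ∫⁻ t, ψ (x + c * t) = ENNReal.ofReal |c|⁻¹ * ∫⁻ s, ψ s := by
  calc ∫⁻ t, ψ (x + c * t)
      = ∫⁻ t, (fun s => ψ (x + s)) (c * t) := rfl
    _ = ∫⁻ s, ψ (x + s) ∂(Measure.map (c * ·) volume) :=
        (lintegral_map (hψ.comp (measurable_const_add x)) (measurable_const_mul c)).symm
    _ = ENNReal.ofReal |c|⁻¹ * ∫⁻ s, ψ (x + s) := by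
        rw [Real.map_volume_mul_left hc, lintegral_smul_measure, abs_inv, smul_eq_mul]
    _ = ENNReal.ofReal |c|⁻¹ * ∫⁻ s, ψ s := by
        rw [← lintegral_map hψ (measurable_const_add x), map_add_left_eq_self volume x]

lemma lint_shift (ψ : ℝ → ℝ≥0∞) (hψ : Measurable ψ) (c : ℝ) :
    ∫⁻ t, ψ (t - c) = ∫⁻ s, ψ s := by
  rw [← lintegral_map hψ (measurable_sub_const c), map_sub_right_eq_self volume c]

lemma shear_mp (c : ℝ) :
    MeasurePreserving (fun z : ℝ × ℝ => (z.1 - c * z.2, z.2))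
      ((volume : Measure ℝ).prod volume) ((volume : Measure ℝ).prod volume) := by
  have h1 : MeasurePreserving (fun z : ℝ × ℝ => (z.1, z.2 - c * z.1))
      ((volume : Measure ℝ).prod volume) ((volume : Measure ℝ).prod volume) :=
    (MeasurePreserving.id volume).skew_product (g := fun a b => b - c * a)
      (measurable_snd.sub (measurable_fst.const_mul c))
      (Filter.Eventually.of_forall fun x => map_sub_right_eq_self volume (c * x))
  exact (Measure.measurePreserving_swap (μ := (volume : Measure ℝ)) (ν := volume)).comp
    (h1.comp (Measure.measurePreserving_swap (μ := (volume : Measure ℝ)) (ν := volume)))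

lemma ae_shear {f f' : ℝ → ℝ≥0∞} (h : f =ᵐ[(volume : Measure ℝ)] f') (c : ℝ) :
    ∀ᵐ z : ℝ × ℝ ∂((volume : Measure ℝ).prod volume),
      f (z.1 - c * z.2) = f' (z.1 - c * z.2) := by
  have hN : (volume : Measure ℝ) {y | f y ≠ f' y} = 0 := h
  have h0 : ((volume : Measure ℝ).prod volume) ({y | f y ≠ f' y} ×ˢ (Set.univ : Set ℝ)) = 0 := by
    rw [Measure.prod_prod, hN, zero_mul]
  have h2 := (shear_mp c).quasiMeasurePreserving.preimage_null h0
  refine ae_iff.2 (measure_mono_null (fun z hz => ?_) h2)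
  exact ⟨hz, Set.mem_univ _⟩

/-- Six-factor Hölder inequality specialized. -/
lemma holder6 {X : Type*} [MeasurableSpace X] (μ : Measure X)
    (f₁ f₂ f₃ f₄ f₅ f₆ : X → ℝ≥0∞)
    (h₁ : AEMeasurable f₁ μ) (h₂ : AEMeasurable f₂ μ) (h₃ : AEMeasurable f₃ μ)
    (h₄ : AEMeasurable f₄ μ) (h₅ : AEMeasurable f₅ μ) (h₆ : AEMeasurable f₆ μ)
    (u v w e f g : ℝ) (hu : 0 ≤ u) (hv : 0 ≤ v) (hw : 0 ≤ w)
    (he : 0 ≤ e) (hf : 0 ≤ f) (hg : 0 ≤ g)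
    (hsum : u + v + w + e + f + g = 1) :
    ∫⁻ x, f₁ x ^ u * f₂ x ^ v * f₃ x ^ w * f₄ x ^ e * f₅ x ^ f * f₆ x ^ g ∂μ ≤
      (∫⁻ x, f₁ x ∂μ) ^ u * (∫⁻ x, f₂ x ∂μ) ^ v * (∫⁻ x, f₃ x ∂μ) ^ w *
      (∫⁻ x, f₄ x ∂μ) ^ e * (∫⁻ x, f₅ x ∂μ) ^ f * (∫⁻ x, f₆ x ∂μ) ^ g := by
  have := ENNReal.lintegral_prod_norm_pow_le (μ := μ) (Finset.univ : Finset (Fin 6))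
    (f := ![f₁, f₂, f₃, f₄, f₅, f₆]) (p := ![u, v, w, e, f, g])
    (fun i _ => by fin_cases i <;> assumption)
    (by rw [Fin.sum_univ_six]; exact hsum) (fun i _ => by fin_cases i <;> assumption)
  simpa [Fin.prod_univ_six, Matrix.cons_val_succ] using this

lemma holder3 {X : Type*} [MeasurableSpace X] (μ : Measure X)
    (f₁ f₂ f₃ : X → ℝ≥0∞)
    (h₁ : AEMeasurable f₁ μ) (h₂ : AEMeasurable f₂ μ) (h₃ : AEMeasurable f₃ μ)
    (u v w : ℝ) (hu : 0 ≤ u) (hv : 0 ≤ v) (hw : 0 ≤ w)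
    (hsum : u + v + w = 1) :
    ∫⁻ x, f₁ x ^ u * f₂ x ^ v * f₃ x ^ w ∂μ ≤
      (∫⁻ x, f₁ x ∂μ) ^ u * (∫⁻ x, f₂ x ∂μ) ^ v * (∫⁻ x, f₃ x ∂μ) ^ w := by
  have := ENNReal.lintegral_prod_norm_pow_le (μ := μ) (Finset.univ : Finset (Fin 3))
    (f := ![f₁, f₂, f₃]) (p := ![u, v, w])
    (fun i _ => by fin_cases i <;> assumption)
    (by rw [Fin.sum_univ_three]; exact hsum) (fun i _ => by fin_cases i <;> assumption)
  simpa [Fin.prod_univ_three] using this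

lemma master_fin (α β : ℝ) (F G W : ℝ → ℝ≥0∞)
    (hF : Measurable F) (hG : Measurable G) (hW : Measurable W)
    (q₁ q₂ q₀ q₃ : ℝ) (hq₃ : 0 < q₃)
    (u v w e f g : ℝ) (hu : 0 ≤ u) (hv : 0 ≤ v) (hw : 0 ≤ w)
    (he : 0 ≤ e) (hf : 0 ≤ f) (hg : 0 ≤ g)
    (hsum6 : u + v + w + e + f + g = 1) (huvw : (u + v + w) * q₃ = 1)
    (s₁ s₂ s₃ : ℝ≥0∞)
    (hs₁ : ∀ x : ℝ, (∫⁻ t, F (x - α * t) ^ q₁) = s₁)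
    (hs₂ : ∀ x : ℝ, (∫⁻ t, G (x - β * t) ^ q₂) = s₂)
    (hs₃ : (∫⁻ t, W t ^ q₀) = s₃)
    (hid : ∀ x t : ℝ, F (x - α * t) * G (x - β * t) * W t =
      (F (x - α * t) ^ q₁ * W t ^ q₀) ^ u * (G (x - β * t) ^ q₂ * W t ^ q₀) ^ v *
        (F (x - α * t) ^ q₁ * G (x - β * t) ^ q₂) ^ w *
        (F (x - α * t) ^ q₁) ^ e * (G (x - β * t) ^ q₂) ^ f * (W t ^ q₀) ^ g) :
    (∫⁻ x, (∫⁻ t, F (x - α * t) * G (x - β * t) * W t) ^ q₃) ^ (1 / q₃) ≤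
      (∫⁻ x, ∫⁻ t, F (x - α * t) ^ q₁ * W t ^ q₀) ^ u *
      (∫⁻ x, ∫⁻ t, G (x - β * t) ^ q₂ * W t ^ q₀) ^ v *
      (∫⁻ x, ∫⁻ t, F (x - α * t) ^ q₁ * G (x - β * t) ^ q₂) ^ w *
      s₁ ^ e * s₂ ^ f * s₃ ^ g := by
  have hmFq : Measurable fun z : ℝ × ℝ => F (z.1 - α * z.2) ^ q₁ :=
    (hF.comp (measurable_fst.sub (measurable_snd.const_mul α))).pow_const q₁
  have hmGq : Measurable fun z : ℝ × ℝ => G (z.1 - β * z.2) ^ q₂ :=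
    (hG.comp (measurable_fst.sub (measurable_snd.const_mul β))).pow_const q₂
  have hmWq : Measurable fun z : ℝ × ℝ => W z.2 ^ q₀ :=
    (hW.comp measurable_snd).pow_const q₀
  set Φ₁ : ℝ → ℝ≥0∞ := fun x => ∫⁻ t, F (x - α * t) ^ q₁ * W t ^ q₀ with hΦ₁
  set Φ₂ : ℝ → ℝ≥0∞ := fun x => ∫⁻ t, G (x - β * t) ^ q₂ * W t ^ q₀ with hΦ₂
  set Φ₃ : ℝ → ℝ≥0∞ := fun x => ∫⁻ t, F (x - α * t) ^ q₁ * G (x - β * t) ^ q₂ with hΦ₃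
  have hmΦ₁ : Measurable Φ₁ := Measurable.lintegral_prod_right' (hmFq.mul hmWq)
  have hmΦ₂ : Measurable Φ₂ := Measurable.lintegral_prod_right' (hmGq.mul hmWq)
  have hmΦ₃ : Measurable Φ₃ := Measurable.lintegral_prod_right' (hmFq.mul hmGq)
  set S : ℝ≥0∞ := s₁ ^ e * s₂ ^ f * s₃ ^ g with hS
  have key : ∀ x : ℝ, (∫⁻ t, F (x - α * t) * G (x - β * t) * W t) ≤
      Φ₁ x ^ u * Φ₂ x ^ v * Φ₃ x ^ w * S := by
    intro x
    have h6 := holder6 (volume : Measure ℝ)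
      (fun t => F (x - α * t) ^ q₁ * W t ^ q₀)
      (fun t => G (x - β * t) ^ q₂ * W t ^ q₀)
      (fun t => F (x - α * t) ^ q₁ * G (x - β * t) ^ q₂)
      (fun t => F (x - α * t) ^ q₁)
      (fun t => G (x - β * t) ^ q₂)
      (fun t => W t ^ q₀)
      ((((hF.comp (measurable_const.sub (measurable_id.const_mul α))).pow_const q₁).mul
        ((hW.pow_const q₀))).aemeasurable)
      ((((hG.comp (measurable_const.sub (measurable_id.const_mul β))).pow_const q₂).mul
        ((hW.pow_const q₀))).aemeasurable)
      ((((hF.comp (measurable_const.sub (measurable_id.const_mul α))).pow_const q₁).mul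
        ((hG.comp (measurable_const.sub (measurable_id.const_mul β))).pow_const q₂)).aemeasurable)
      (((hF.comp (measurable_const.sub (measurable_id.const_mul α))).pow_const q₁).aemeasurable)
      (((hG.comp (measurable_const.sub (measurable_id.const_mul β))).pow_const q₂).aemeasurable)
      ((hW.pow_const q₀).aemeasurable)
      u v w e f g hu hv hw he hf hg hsum6
    calc (∫⁻ t, F (x - α * t) * G (x - β * t) * W t)
        = ∫⁻ t, (F (x - α * t) ^ q₁ * W t ^ q₀) ^ u * (G (x - β * t) ^ q₂ * W t ^ q₀) ^ v *
            (F (x - α * t) ^ q₁ * G (x - β * t) ^ q₂) ^ w *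
            (F (x - α * t) ^ q₁) ^ e * (G (x - β * t) ^ q₂) ^ f * (W t ^ q₀) ^ g :=
          lintegral_congr fun t => hid x t
      _ ≤ Φ₁ x ^ u * Φ₂ x ^ v * Φ₃ x ^ w *
            (∫⁻ t, F (x - α * t) ^ q₁) ^ e * (∫⁻ t, G (x - β * t) ^ q₂) ^ f *
            (∫⁻ t, W t ^ q₀) ^ g := h6
      _ = Φ₁ x ^ u * Φ₂ x ^ v * Φ₃ x ^ w * S := by
          rw [hs₁ x, hs₂ x, hs₃, hS]; ring
  have hinvq₃ : (0 : ℝ) ≤ 1 / q₃ := by positivity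
  calc (∫⁻ x, (∫⁻ t, F (x - α * t) * G (x - β * t) * W t) ^ q₃) ^ (1 / q₃)
      ≤ (∫⁻ x, (Φ₁ x ^ u * Φ₂ x ^ v * Φ₃ x ^ w * S) ^ q₃) ^ (1 / q₃) := by
        gcongr with x
        · exact key x
    _ = ((∫⁻ x, Φ₁ x ^ (u * q₃) * Φ₂ x ^ (v * q₃) * Φ₃ x ^ (w * q₃)) * S ^ q₃) ^ (1 / q₃) := by
        rw [← show ∫⁻ x, Φ₁ x ^ (u * q₃) * Φ₂ x ^ (v * q₃) * Φ₃ x ^ (w * q₃) * S ^ q₃ =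
            (∫⁻ x, Φ₁ x ^ (u * q₃) * Φ₂ x ^ (v * q₃) * Φ₃ x ^ (w * q₃)) * S ^ q₃ from
          lintegral_mul_const'' _
          ((((hmΦ₁.pow_const _).mul (hmΦ₂.pow_const _)).mul (hmΦ₃.pow_const _)).aemeasurable)]
        congr 1
        refine lintegral_congr fun x => ?_
        rw [ENNReal.mul_rpow_of_nonneg _ _ hq₃.le, ENNReal.mul_rpow_of_nonneg _ _ hq₃.le,
          ENNReal.mul_rpow_of_nonneg _ _ hq₃.le, ENNReal.rpow_mul, ENNReal.rpow_mul,
          ENNReal.rpow_mul]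
    _ ≤ (((∫⁻ x, Φ₁ x) ^ (u * q₃) * (∫⁻ x, Φ₂ x) ^ (v * q₃) * (∫⁻ x, Φ₃ x) ^ (w * q₃)) *
          S ^ q₃) ^ (1 / q₃) := by
        gcongr
        exact holder3 volume Φ₁ Φ₂ Φ₃ hmΦ₁.aemeasurable hmΦ₂.aemeasurable hmΦ₃.aemeasurable
          _ _ _ (by positivity) (by positivity) (by positivity) (by linarith [huvw])
    _ = (∫⁻ x, Φ₁ x) ^ u * (∫⁻ x, Φ₂ x) ^ v * (∫⁻ x, Φ₃ x) ^ w * s₁ ^ e * s₂ ^ f * s₃ ^ g := by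
        rw [ENNReal.mul_rpow_of_nonneg _ _ hinvq₃, ENNReal.mul_rpow_of_nonneg _ _ hinvq₃,
          ENNReal.mul_rpow_of_nonneg _ _ hinvq₃, ← ENNReal.rpow_mul, ← ENNReal.rpow_mul,
          ← ENNReal.rpow_mul, ← ENNReal.rpow_mul]
        have hq₃' : q₃ * (1 / q₃) = 1 := by field_simp
        rw [mul_assoc u, mul_assoc v, mul_assoc w, hq₃', mul_one, mul_one, mul_one, hS,
          ENNReal.rpow_one]
        ring

lemma master_top (α β : ℝ) (F G W : ℝ → ℝ≥0∞)
    (hF : Measurable F) (hG : Measurable G) (hW : Measurable W)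
    (q₁ q₂ q₀ : ℝ) (e f g : ℝ) (he : 0 ≤ e) (hf : 0 ≤ f) (hg : 0 ≤ g)
    (hsum3 : e + f + g = 1)
    (s₁ s₂ s₃ : ℝ≥0∞)
    (hs₁ : ∀ x : ℝ, (∫⁻ t, F (x - α * t) ^ q₁) = s₁)
    (hs₂ : ∀ x : ℝ, (∫⁻ t, G (x - β * t) ^ q₂) = s₂)
    (hs₃ : (∫⁻ t, W t ^ q₀) = s₃)
    (hid : ∀ x t : ℝ, F (x - α * t) * G (x - β * t) * W t =
      (F (x - α * t) ^ q₁) ^ e * (G (x - β * t) ^ q₂) ^ f * (W t ^ q₀) ^ g) :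
    ∀ x : ℝ, (∫⁻ t, F (x - α * t) * G (x - β * t) * W t) ≤ s₁ ^ e * s₂ ^ f * s₃ ^ g := by
  intro x
  have h3 := holder3 (volume : Measure ℝ)
    (fun t => F (x - α * t) ^ q₁) (fun t => G (x - β * t) ^ q₂) (fun t => W t ^ q₀)
    (((hF.comp (measurable_const.sub (measurable_id.const_mul α))).pow_const q₁).aemeasurable)
    (((hG.comp (measurable_const.sub (measurable_id.const_mul β))).pow_const q₂).aemeasurable)
    ((hW.pow_const q₀).aemeasurable)
    e f g he hf hg hsum3
  calc (∫⁻ t, F (x - α * t) * G (x - β * t) * W t)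
      = ∫⁻ t, (F (x - α * t) ^ q₁) ^ e * (G (x - β * t) ^ q₂) ^ f * (W t ^ q₀) ^ g :=
        lintegral_congr fun t => hid x t
    _ ≤ (∫⁻ t, F (x - α * t) ^ q₁) ^ e * (∫⁻ t, G (x - β * t) ^ q₂) ^ f *
        (∫⁻ t, W t ^ q₀) ^ g := h3
    _ = s₁ ^ e * s₂ ^ f * s₃ ^ g := by rw [hs₁ x, hs₂ x, hs₃]

lemma single_int (c : ℝ) (hc : c ≠ 0) (P : ℝ → ℝ≥0∞) (hP : Measurable P) (x : ℝ) :
    (∫⁻ t, P (x - c * t)) = ENNReal.ofReal |c|⁻¹ * ∫⁻ y, P y := by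
  have : ∀ t : ℝ, x - c * t = x + (-c) * t := fun t => by ring
  simp_rw [this]
  rw [lint_affine P hP (by simpa using hc) x, abs_neg]

lemma double_one (c : ℝ) (P Q : ℝ → ℝ≥0∞) (hP : Measurable P) (hQ : Measurable Q) :
    (∫⁻ x, ∫⁻ t, P (x - c * t) * Q t) = (∫⁻ y, P y) * ∫⁻ y, Q y := by
  rw [lintegral_lintegral_swap
    (((hP.comp (measurable_fst.sub (measurable_snd.const_mul c))).mul
      (hQ.comp measurable_snd)).aemeasurable)]
  calc ∫⁻ t, ∫⁻ x, P (x - c * t) * Q t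
      = ∫⁻ t, (∫⁻ x, P (x - c * t)) * Q t := by
        refine lintegral_congr fun t => ?_
        rw [lintegral_mul_const _ (hP.comp' (measurable_sub_const (c * t)))]
    _ = ∫⁻ t, (∫⁻ y, P y) * Q t := by
        refine lintegral_congr fun t => ?_
        rw [lint_shift P hP (c * t)]
    _ = (∫⁻ y, P y) * ∫⁻ y, Q y := lintegral_const_mul _ hQ

lemma double_two (a b : ℝ) (hab : a ≠ b) (P Q : ℝ → ℝ≥0∞)
    (hP : Measurable P) (hQ : Measurable Q) :
    (∫⁻ x, ∫⁻ t, P (x - a * t) * Q (x - b * t)) =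
      ENNReal.ofReal |a - b|⁻¹ * ((∫⁻ y, P y) * ∫⁻ y, Q y) := by
  rw [lintegral_lintegral_swap
    (((hP.comp (measurable_fst.sub (measurable_snd.const_mul a))).mul
      (hQ.comp (measurable_fst.sub (measurable_snd.const_mul b)))).aemeasurable)]
  have hstep : ∀ t : ℝ, (∫⁻ x, P (x - a * t) * Q (x - b * t)) =
      ∫⁻ x, P x * Q (x + (a - b) * t) := by
    intro t
    have hψ : Measurable fun y => P y * Q (y + (a - b) * t) :=
      hP.mul (hQ.comp (measurable_add_const ((a - b) * t)))
    have : ∀ x : ℝ, P (x - a * t) * Q (x - b * t) =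
        (fun y => P y * Q (y + (a - b) * t)) (x - a * t) := by
      intro x
      simp only
      congr 2
      ring
    simp_rw [this]
    exact lint_shift _ hψ (a * t)
  simp_rw [hstep]
  rw [lintegral_lintegral_swap
    (((hP.comp measurable_snd).mul
      (hQ.comp (measurable_snd.add ((measurable_fst.const_mul (a - b)))))).aemeasurable)]
  calc ∫⁻ x, ∫⁻ t, P x * Q (x + (a - b) * t)
      = ∫⁻ x, P x * ∫⁻ t, Q (x + (a - b) * t) := by
        refine lintegral_congr fun x => ?_
        exact lintegral_const_mul _ (hQ.comp (measurable_const_add x |>.comp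
          (measurable_id.const_mul (a - b))))
    _ = ∫⁻ x, P x * (ENNReal.ofReal |a - b|⁻¹ * ∫⁻ y, Q y) := by
        refine lintegral_congr fun x => ?_
        rw [lint_affine Q hQ (sub_ne_zero.2 hab) x]
    _ = ENNReal.ofReal |a - b|⁻¹ * ((∫⁻ y, P y) * ∫⁻ y, Q y) := by
        rw [lintegral_mul_const _ hP]; ring

lemma choose_weights {r₀ r₁ r₂ r₃ : ℝ}
    (h₀ : 0 ≤ r₀) (h₁ : 0 ≤ r₁) (h₂ : 0 ≤ r₂) (h₃ : 0 ≤ r₃)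
    (h₀' : r₀ ≤ 1) (h₁' : r₁ ≤ 1) (h₂' : r₂ ≤ 1) (h₃' : r₃ ≤ 1)
    (hs : r₁ + r₂ + r₀ = 1 + r₃) :
    ∃ u v w : ℝ, 0 ≤ u ∧ 0 ≤ v ∧ 0 ≤ w ∧ u + v + w = r₃ ∧
      u + w ≤ r₁ ∧ v + w ≤ r₂ ∧ u + v ≤ r₀ := by
  set w : ℝ := max 0 (r₃ - r₀) with hw
  set u : ℝ := min (r₁ - w) (r₃ - w) with hu
  set v : ℝ := r₃ - w - u with hv
  have hw0 : 0 ≤ w := le_max_left _ _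
  have hwr₃ : w ≤ r₃ := by
    rcases max_cases 0 (r₃ - r₀) with ⟨h, _⟩ | ⟨h, _⟩ <;> rw [hw, h] <;> linarith
  have hwr₁ : w ≤ r₁ := by
    rcases max_cases 0 (r₃ - r₀) with ⟨h, _⟩ | ⟨h, _⟩ <;> rw [hw, h] <;> linarith
  have hwr₂ : w ≤ r₂ := by
    rcases max_cases 0 (r₃ - r₀) with ⟨h, _⟩ | ⟨h, _⟩ <;> rw [hw, h] <;> linarith
  have hu0 : 0 ≤ u := le_min (by linarith) (by linarith)
  have huw : u ≤ r₃ - w := min_le_right _ _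
  have huw1 : u ≤ r₁ - w := min_le_left _ _
  refine ⟨u, v, w, hu0, by rw [hv]; linarith, hw0, by rw [hv]; ring, by linarith,
    ?_, ?_⟩
  · -- v + w ≤ r₂
    rcases min_cases (r₁ - w) (r₃ - w) with ⟨h, _⟩ | ⟨h, _⟩
    · rw [hv, hu, h]
      rcases max_cases 0 (r₃ - r₀) with ⟨h', _⟩ | ⟨h', _⟩ <;> rw [hw, h'] <;> linarith
    · rw [hv, hu, h]; linarith
  · -- u + v ≤ r₀
    have : u + v = r₃ - w := by rw [hv]; ring
    rw [this]
    rcases max_cases 0 (r₃ - r₀) with ⟨h', _⟩ | ⟨h', _⟩ <;> rw [hw, h'] <;> linarith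

lemma ae_shear_pred {P : ℝ → Prop} (h : ∀ᵐ y ∂(volume : Measure ℝ), P y) (c : ℝ) :
    ∀ᵐ z : ℝ × ℝ ∂((volume : Measure ℝ).prod volume), P (z.1 - c * z.2) := by
  have hN : (volume : Measure ℝ) {y | ¬ P y} = 0 := h
  have h0 : ((volume : Measure ℝ).prod volume) ({y | ¬ P y} ×ˢ (Set.univ : Set ℝ)) = 0 := by
    rw [Measure.prod_prod, hN, zero_mul]
  have h2 := (shear_mp c).quasiMeasurePreserving.preimage_null h0
  refine ae_iff.2 (measure_mono_null (fun z hz => ?_) h2)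
  exact ⟨hz, Set.mem_univ _⟩

lemma ae_snd_pred {P : ℝ → Prop} (h : ∀ᵐ y ∂(volume : Measure ℝ), P y) :
    ∀ᵐ z : ℝ × ℝ ∂((volume : Measure ℝ).prod volume), P z.2 := by
  have hN : (volume : Measure ℝ) {y | ¬ P y} = 0 := h
  refine ae_iff.2 (measure_mono_null (fun z hz => ?_)
    (show ((volume : Measure ℝ).prod volume) ((Set.univ : Set ℝ) ×ˢ {y | ¬ P y}) = 0 by
      rw [Measure.prod_prod, hN, mul_zero]))
  exact ⟨Set.mem_univ _, hz⟩

lemma rpow_collect3 (A : ℝ≥0∞) {u w e r : ℝ} (hu : 0 ≤ u) (hw : 0 ≤ w) (he : 0 ≤ e)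
    (h : u + w + e = r) : A ^ u * A ^ w * A ^ e = A ^ r := by
  rw [← ENNReal.rpow_add_of_nonneg u w hu hw,
    ← ENNReal.rpow_add_of_nonneg (u + w) e (by linarith) he, h]

lemma hid_alg (a b c : ℝ≥0∞) (q₁ q₂ q₀ u v w e f g : ℝ)
    (hq₁ : 0 ≤ q₁) (hq₂ : 0 ≤ q₂) (hq₀ : 0 ≤ q₀)
    (hu : 0 ≤ u) (hv : 0 ≤ v) (hw : 0 ≤ w) (he : 0 ≤ e) (hf : 0 ≤ f) (hg : 0 ≤ g)
    (ha : a ^ (q₁ * (u + w + e)) = a) (hb : b ^ (q₂ * (v + w + f)) = b)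
    (hc : c ^ (q₀ * (u + v + g)) = c) :
    a * b * c = (a ^ q₁ * c ^ q₀) ^ u * (b ^ q₂ * c ^ q₀) ^ v *
      (a ^ q₁ * b ^ q₂) ^ w * (a ^ q₁) ^ e * (b ^ q₂) ^ f * (c ^ q₀) ^ g := by
  have Ha : a ^ (q₁ * u) * a ^ (q₁ * w) * a ^ (q₁ * e) = a := by
    rw [rpow_collect3 a (mul_nonneg hq₁ hu) (mul_nonneg hq₁ hw) (mul_nonneg hq₁ he)
      (show q₁ * u + q₁ * w + q₁ * e = q₁ * (u + w + e) by ring), ha]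
  have Hb : b ^ (q₂ * v) * b ^ (q₂ * w) * b ^ (q₂ * f) = b := by
    rw [rpow_collect3 b (mul_nonneg hq₂ hv) (mul_nonneg hq₂ hw) (mul_nonneg hq₂ hf)
      (show q₂ * v + q₂ * w + q₂ * f = q₂ * (v + w + f) by ring), hb]
  have Hc : c ^ (q₀ * u) * c ^ (q₀ * v) * c ^ (q₀ * g) = c := by
    rw [rpow_collect3 c (mul_nonneg hq₀ hu) (mul_nonneg hq₀ hv) (mul_nonneg hq₀ hg)
      (show q₀ * u + q₀ * v + q₀ * g = q₀ * (u + v + g) by ring), hc]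
  calc a * b * c
      = (a ^ (q₁ * u) * a ^ (q₁ * w) * a ^ (q₁ * e)) *
        (b ^ (q₂ * v) * b ^ (q₂ * w) * b ^ (q₂ * f)) *
        (c ^ (q₀ * u) * c ^ (q₀ * v) * c ^ (q₀ * g)) := by rw [Ha, Hb, Hc]
    _ = (a ^ (q₁ * u) * c ^ (q₀ * u)) * (b ^ (q₂ * v) * c ^ (q₀ * v)) *
        (a ^ (q₁ * w) * b ^ (q₂ * w)) * a ^ (q₁ * e) * b ^ (q₂ * f) * c ^ (q₀ * g) := by
        ring
    _ = (a ^ q₁ * c ^ q₀) ^ u * (b ^ q₂ * c ^ q₀) ^ v *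
        (a ^ q₁ * b ^ q₂) ^ w * (a ^ q₁) ^ e * (b ^ q₂) ^ f * (c ^ q₀) ^ g := by
        rw [ENNReal.mul_rpow_of_nonneg _ _ hu, ENNReal.mul_rpow_of_nonneg _ _ hv,
          ENNReal.mul_rpow_of_nonneg _ _ hw, ← ENNReal.rpow_mul a q₁ u,
          ← ENNReal.rpow_mul c q₀ u, ← ENNReal.rpow_mul b q₂ v, ← ENNReal.rpow_mul c q₀ v,
          ← ENNReal.rpow_mul a q₁ w, ← ENNReal.rpow_mul b q₂ w, ← ENNReal.rpow_mul a q₁ e,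
          ← ENNReal.rpow_mul b q₂ f, ← ENNReal.rpow_mul c q₀ g]

lemma collect_bound (A B C c₁ c₂ c₃ : ℝ≥0∞) (u v w e f g r₁ r₂ r₀ : ℝ)
    (hu : 0 ≤ u) (hv : 0 ≤ v) (hw : 0 ≤ w) (he : 0 ≤ e) (hf : 0 ≤ f) (hg : 0 ≤ g)
    (h₁ : u + w + e = r₁) (h₂ : v + w + f = r₂) (h₀ : u + v + g = r₀) :
    (A * C) ^ u * (B * C) ^ v * (c₃ * (A * B)) ^ w * (c₁ * A) ^ e * (c₂ * B) ^ f * C ^ g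
      = (c₃ ^ w * c₁ ^ e * c₂ ^ f) * (A ^ r₁ * B ^ r₂ * C ^ r₀) := by
  rw [ENNReal.mul_rpow_of_nonneg A C hu, ENNReal.mul_rpow_of_nonneg B C hv,
    ENNReal.mul_rpow_of_nonneg c₃ _ hw, ENNReal.mul_rpow_of_nonneg A B hw,
    ENNReal.mul_rpow_of_nonneg c₁ A he, ENNReal.mul_rpow_of_nonneg c₂ B hf,
    ← rpow_collect3 A hu hw he h₁, ← rpow_collect3 B hv hw hf h₂,
    ← rpow_collect3 C hu hv hg h₀]
  ring
/-- bilinear Young inequality: for `α, β ≠ 0`, `α ≠ β`, exponents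
`1 ≤ p₀, p₁, p₂, p₃ ≤ ∞` with `1/p₁ + 1/p₂ + 1/p₀ = 1 + 1/p₃`, there is a
constant `C = C(α, β, p₀, p₁, p₂)` such that for every `K ∈ L^{p₀}`,
`f ∈ L^{p₁}`, `g ∈ L^{p₂}`,
`‖∫ f(x-αt)g(x-βt)K(t)dt‖_{p₃} ≤ C ‖K‖_{p₀} ‖f‖_{p₁} ‖g‖_{p₂}`. -/
theorem bilinear_young
    (α β : ℝ) (hα : α ≠ 0) (hβ : β ≠ 0) (hαβ : α ≠ β)
    (p₀ p₁ p₂ p₃ : ℝ≥0∞) (hp₀ : 1 ≤ p₀) (hp₁ : 1 ≤ p₁) (hp₂ : 1 ≤ p₂) (hp₃ : 1 ≤ p₃)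
    (hsum : p₁⁻¹ + p₂⁻¹ + p₀⁻¹ = 1 + p₃⁻¹) :
    ∃ C : ℝ, 0 < C ∧ ∀ K f g : ℝ → ℂ,
      MemLp K p₀ volume → MemLp f p₁ volume → MemLp g p₂ volume →
      eLpNorm (fun x : ℝ => ∫ t : ℝ, f (x - α * t) * g (x - β * t) * K t) p₃ volume
        ≤ ENNReal.ofReal C * eLpNorm K p₀ volume * eLpNorm f p₁ volume *
            eLpNorm g p₂ volume := by
  classical
  have hp₁0 : p₁ ≠ 0 := (lt_of_lt_of_le zero_lt_one hp₁).ne'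
  have hp₂0 : p₂ ≠ 0 := (lt_of_lt_of_le zero_lt_one hp₂).ne'
  have hp₀0 : p₀ ≠ 0 := (lt_of_lt_of_le zero_lt_one hp₀).ne'
  have hp₃0 : p₃ ≠ 0 := (lt_of_lt_of_le zero_lt_one hp₃).ne'
  have hfin : ∀ p : ℝ≥0∞, 1 ≤ p → p⁻¹ ≠ ∞ := fun p hp =>
    ne_top_of_le_ne_top one_ne_top (ENNReal.inv_le_one.2 hp)
  have hrle1 : ∀ p : ℝ≥0∞, 1 ≤ p → (p⁻¹).toReal ≤ 1 := fun p hp => by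
    simpa using ENNReal.toReal_mono one_ne_top (ENNReal.inv_le_one.2 hp)
  set r₁ : ℝ := (p₁⁻¹).toReal with hr₁def
  set r₂ : ℝ := (p₂⁻¹).toReal with hr₂def
  set r₀ : ℝ := (p₀⁻¹).toReal with hr₀def
  set r₃ : ℝ := (p₃⁻¹).toReal with hr₃def
  have hsumr : r₁ + r₂ + r₀ = 1 + r₃ := by
    have h := congrArg ENNReal.toReal hsum
    rwa [ENNReal.toReal_add (ENNReal.add_ne_top.2 ⟨hfin _ hp₁, hfin _ hp₂⟩) (hfin _ hp₀),
      ENNReal.toReal_add (hfin _ hp₁) (hfin _ hp₂),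
      ENNReal.toReal_add one_ne_top (hfin _ hp₃), ENNReal.toReal_one] at h
  obtain ⟨u, v, w, hu, hv, hw, huvw, hle₁, hle₂, hle₀⟩ :=
    choose_weights ENNReal.toReal_nonneg ENNReal.toReal_nonneg ENNReal.toReal_nonneg
      ENNReal.toReal_nonneg (hrle1 _ hp₀) (hrle1 _ hp₁) (hrle1 _ hp₂) (hrle1 _ hp₃) hsumr
  rw [← hr₃def] at huvw
  set e : ℝ := r₁ - u - w with hedef
  set f' : ℝ := r₂ - v - w with hf'def
  set g' : ℝ := r₀ - u - v with hg'def
  have he : 0 ≤ e := by rw [hedef]; linarith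
  have hf'0 : 0 ≤ f' := by rw [hf'def]; linarith
  have hg'0 : 0 ≤ g' := by rw [hg'def]; linarith
  have h₁sum : u + w + e = r₁ := by rw [hedef]; ring
  have h₂sum : v + w + f' = r₂ := by rw [hf'def]; ring
  have h₀sum : u + v + g' = r₀ := by rw [hg'def]; ring
  have hsum6 : u + v + w + e + f' + g' = 1 := by
    rw [hedef, hf'def, hg'def]; linarith
  set Creal : ℝ := |α|⁻¹ ^ e * |β|⁻¹ ^ f' * |α - β|⁻¹ ^ w with hCdef
  have habs_α : (0:ℝ) < |α|⁻¹ := by rw [inv_pos, abs_pos]; exact hα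
  have habs_β : (0:ℝ) < |β|⁻¹ := by rw [inv_pos, abs_pos]; exact hβ
  have habs_αβ : (0:ℝ) < |α - β|⁻¹ := by rw [inv_pos, abs_pos, sub_ne_zero]; exact hαβ
  have hCpos : 0 < Creal :=
    mul_pos (mul_pos (Real.rpow_pos_of_pos habs_α e) (Real.rpow_pos_of_pos habs_β f'))
      (Real.rpow_pos_of_pos habs_αβ w)
  refine ⟨Creal, hCpos, ?_⟩
  intro K f g hK hf hg
  -- exponents
  set q₁ : ℝ := if p₁ = ∞ then 1 else p₁.toReal with hq₁def
  set q₂ : ℝ := if p₂ = ∞ then 1 else p₂.toReal with hq₂def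
  set q₀ : ℝ := if p₀ = ∞ then 1 else p₀.toReal with hq₀def
  have hq₁0 : 0 ≤ q₁ := by
    rw [hq₁def]; split <;> [norm_num; exact ENNReal.toReal_nonneg]
  have hq₂0 : 0 ≤ q₂ := by
    rw [hq₂def]; split <;> [norm_num; exact ENNReal.toReal_nonneg]
  have hq₀0 : 0 ≤ q₀ := by
    rw [hq₀def]; split <;> [norm_num; exact ENNReal.toReal_nonneg]
  -- measurable substitutes
  have hFae : AEMeasurable (fun x => (‖f x‖₊ : ℝ≥0∞)) volume := hf.aestronglyMeasurable.enorm
  have hGae : AEMeasurable (fun x => (‖g x‖₊ : ℝ≥0∞)) volume := hg.aestronglyMeasurable.enorm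
  have hWae : AEMeasurable (fun x => (‖K x‖₊ : ℝ≥0∞)) volume := hK.aestronglyMeasurable.enorm
  set F : ℝ → ℝ≥0∞ := if p₁ = ∞ then (fun _ => 1) else hFae.mk _ with hFdef
  set G : ℝ → ℝ≥0∞ := if p₂ = ∞ then (fun _ => 1) else hGae.mk _ with hGdef
  set W : ℝ → ℝ≥0∞ := if p₀ = ∞ then (fun _ => 1) else hWae.mk _ with hWdef
  have hFmeas : Measurable F := by
    rw [hFdef]; split; exacts [measurable_const, hFae.measurable_mk]
  have hGmeas : Measurable G := by
    rw [hGdef]; split; exacts [measurable_const, hGae.measurable_mk]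
  have hWmeas : Measurable W := by
    rw [hWdef]; split; exacts [measurable_const, hWae.measurable_mk]
  set m₁ : ℝ≥0∞ := if p₁ = ∞ then eLpNormEssSup f volume else 1 with hm₁def
  set m₂ : ℝ≥0∞ := if p₂ = ∞ then eLpNormEssSup g volume else 1 with hm₂def
  set m₀ : ℝ≥0∞ := if p₀ = ∞ then eLpNormEssSup K volume else 1 with hm₀def
  set A : ℝ≥0∞ := ∫⁻ y, F y ^ q₁ with hAdef
  set B : ℝ≥0∞ := ∫⁻ y, G y ^ q₂ with hBdef
  set CC : ℝ≥0∞ := ∫⁻ y, W y ^ q₀ with hCCdef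
  -- a.e. domination
  have hbd₁ : ∀ᵐ x ∂(volume : Measure ℝ), (‖f x‖₊ : ℝ≥0∞) ≤ m₁ * F x := by
    by_cases h : p₁ = ∞
    · filter_upwards [ae_le_eLpNormEssSup (f := f) (μ := volume)] with x hx
      simp only [hFdef, hm₁def, h, if_true, mul_one]
      exact hx
    · filter_upwards [hFae.ae_eq_mk] with x hx
      simp only [hFdef, hm₁def, h, if_false, one_mul]
      exact le_of_eq hx
  have hbd₂ : ∀ᵐ x ∂(volume : Measure ℝ), (‖g x‖₊ : ℝ≥0∞) ≤ m₂ * G x := by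
    by_cases h : p₂ = ∞
    · filter_upwards [ae_le_eLpNormEssSup (f := g) (μ := volume)] with x hx
      simp only [hGdef, hm₂def, h, if_true, mul_one]
      exact hx
    · filter_upwards [hGae.ae_eq_mk] with x hx
      simp only [hGdef, hm₂def, h, if_false, one_mul]
      exact le_of_eq hx
  have hbd₀ : ∀ᵐ x ∂(volume : Measure ℝ), (‖K x‖₊ : ℝ≥0∞) ≤ m₀ * W x := by
    by_cases h : p₀ = ∞
    · filter_upwards [ae_le_eLpNormEssSup (f := K) (μ := volume)] with x hx
      simp only [hWdef, hm₀def, h, if_true, mul_one]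
      exact hx
    · filter_upwards [hWae.ae_eq_mk] with x hx
      simp only [hWdef, hm₀def, h, if_false, one_mul]
      exact le_of_eq hx
  -- norm collection
  have hcol₁ : m₁ * A ^ r₁ = eLpNorm f p₁ volume := by
    by_cases h : p₁ = ∞
    · have : r₁ = 0 := by rw [hr₁def, h]; simp
      rw [this, ENNReal.rpow_zero, mul_one, hm₁def, if_pos h, h, eLpNorm_exponent_top]
    · have hA : A = ∫⁻ x, (‖f x‖₊ : ℝ≥0∞) ^ q₁ := by
        rw [hAdef]
        refine lintegral_congr_ae ?_
        filter_upwards [hFae.ae_eq_mk] with x hx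
        rw [hFdef, if_neg h, ← hx]
      rw [hm₁def, if_neg h, one_mul, eLpNorm_eq_lintegral_rpow_enorm_toReal hp₁0 h]
      simp_rw [enorm_eq_nnnorm]
      rw [hA,
        hq₁def, if_neg h, hr₁def, ENNReal.toReal_inv, one_div]
  have hcol₂ : m₂ * B ^ r₂ = eLpNorm g p₂ volume := by
    by_cases h : p₂ = ∞
    · have : r₂ = 0 := by rw [hr₂def, h]; simp
      rw [this, ENNReal.rpow_zero, mul_one, hm₂def, if_pos h, h, eLpNorm_exponent_top]
    · have hB : B = ∫⁻ x, (‖g x‖₊ : ℝ≥0∞) ^ q₂ := by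
        rw [hBdef]
        refine lintegral_congr_ae ?_
        filter_upwards [hGae.ae_eq_mk] with x hx
        rw [hGdef, if_neg h, ← hx]
      rw [hm₂def, if_neg h, one_mul, eLpNorm_eq_lintegral_rpow_enorm_toReal hp₂0 h]
      simp_rw [enorm_eq_nnnorm]
      rw [hB,
        hq₂def, if_neg h, hr₂def, ENNReal.toReal_inv, one_div]
  have hcol₀ : m₀ * CC ^ r₀ = eLpNorm K p₀ volume := by
    by_cases h : p₀ = ∞
    · have : r₀ = 0 := by rw [hr₀def, h]; simp
      rw [this, ENNReal.rpow_zero, mul_one, hm₀def, if_pos h, h, eLpNorm_exponent_top]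
    · have hC : CC = ∫⁻ x, (‖K x‖₊ : ℝ≥0∞) ^ q₀ := by
        rw [hCCdef]
        refine lintegral_congr_ae ?_
        filter_upwards [hWae.ae_eq_mk] with x hx
        rw [hWdef, if_neg h, ← hx]
      rw [hm₀def, if_neg h, one_mul, eLpNorm_eq_lintegral_rpow_enorm_toReal hp₀0 h]
      simp_rw [enorm_eq_nnnorm]
      rw [hC,
        hq₀def, if_neg h, hr₀def, ENNReal.toReal_inv, one_div]
  -- slot identities
  have hslot₁ : ∀ y : ℝ, F y ^ (q₁ * (u + w + e)) = F y := by
    intro y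
    by_cases h : p₁ = ∞
    · rw [hFdef, if_pos h]; exact ENNReal.one_rpow _
    · have hq : q₁ * (u + w + e) = 1 := by
        rw [h₁sum, hq₁def, if_neg h, hr₁def, ENNReal.toReal_inv]
        rw [mul_inv_cancel₀]
        exact ENNReal.toReal_ne_zero.2 ⟨hp₁0, h⟩
      rw [hq, ENNReal.rpow_one]
  have hslot₂ : ∀ y : ℝ, G y ^ (q₂ * (v + w + f')) = G y := by
    intro y
    by_cases h : p₂ = ∞
    · rw [hGdef, if_pos h]; exact ENNReal.one_rpow _
    · have hq : q₂ * (v + w + f') = 1 := by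
        rw [h₂sum, hq₂def, if_neg h, hr₂def, ENNReal.toReal_inv]
        rw [mul_inv_cancel₀]
        exact ENNReal.toReal_ne_zero.2 ⟨hp₂0, h⟩
      rw [hq, ENNReal.rpow_one]
  have hslot₀ : ∀ y : ℝ, W y ^ (q₀ * (u + v + g')) = W y := by
    intro y
    by_cases h : p₀ = ∞
    · rw [hWdef, if_pos h]; exact ENNReal.one_rpow _
    · have hq : q₀ * (u + v + g') = 1 := by
        rw [h₀sum, hq₀def, if_neg h, hr₀def, ENNReal.toReal_inv]
        rw [mul_inv_cancel₀]
        exact ENNReal.toReal_ne_zero.2 ⟨hp₀0, h⟩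
      rw [hq, ENNReal.rpow_one]
  have hid : ∀ x t : ℝ, F (x - α * t) * G (x - β * t) * W t =
      (F (x - α * t) ^ q₁ * W t ^ q₀) ^ u * (G (x - β * t) ^ q₂ * W t ^ q₀) ^ v *
        (F (x - α * t) ^ q₁ * G (x - β * t) ^ q₂) ^ w *
        (F (x - α * t) ^ q₁) ^ e * (G (x - β * t) ^ q₂) ^ f' * (W t ^ q₀) ^ g' :=
    fun x t => hid_alg _ _ _ q₁ q₂ q₀ u v w e f' g' hq₁0 hq₂0 hq₀0 hu hv hw he hf'0 hg'0
      (hslot₁ _) (hslot₂ _) (hslot₀ _)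
  -- s and D values
  set s₁ : ℝ≥0∞ := ENNReal.ofReal |α|⁻¹ * A with hs₁def
  set s₂ : ℝ≥0∞ := ENNReal.ofReal |β|⁻¹ * B with hs₂def
  have hs₁ : ∀ x : ℝ, (∫⁻ t, F (x - α * t) ^ q₁) = s₁ := fun x =>
    single_int α hα (fun y => F y ^ q₁) (hFmeas.pow_const q₁) x
  have hs₂ : ∀ x : ℝ, (∫⁻ t, G (x - β * t) ^ q₂) = s₂ := fun x =>
    single_int β hβ (fun y => G y ^ q₂) (hGmeas.pow_const q₂) x
  have hs₃ : (∫⁻ t, W t ^ q₀) = CC := rfl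
  have hD₁ : (∫⁻ x, ∫⁻ t, F (x - α * t) ^ q₁ * W t ^ q₀) = A * CC :=
    double_one α (fun y => F y ^ q₁) (fun y => W y ^ q₀)
      (hFmeas.pow_const q₁) (hWmeas.pow_const q₀)
  have hD₂ : (∫⁻ x, ∫⁻ t, G (x - β * t) ^ q₂ * W t ^ q₀) = B * CC :=
    double_one β (fun y => G y ^ q₂) (fun y => W y ^ q₀)
      (hGmeas.pow_const q₂) (hWmeas.pow_const q₀)
  have hD₃ : (∫⁻ x, ∫⁻ t, F (x - α * t) ^ q₁ * G (x - β * t) ^ q₂) =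
      ENNReal.ofReal |α - β|⁻¹ * (A * B) :=
    double_two α β hαβ (fun y => F y ^ q₁) (fun y => G y ^ q₂)
      (hFmeas.pow_const q₁) (hGmeas.pow_const q₂)
  -- the collected constant
  have hConst : (ENNReal.ofReal |α - β|⁻¹) ^ w * (ENNReal.ofReal |α|⁻¹) ^ e *
      (ENNReal.ofReal |β|⁻¹) ^ f' = ENNReal.ofReal Creal := by
    rw [ENNReal.ofReal_rpow_of_pos habs_αβ, ENNReal.ofReal_rpow_of_pos habs_α,
      ENNReal.ofReal_rpow_of_pos habs_β, ← ENNReal.ofReal_mul (by positivity),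
      ← ENNReal.ofReal_mul (by positivity), hCdef]
    congr 1
    ring
  have hT : (A * CC) ^ u * (B * CC) ^ v * (ENNReal.ofReal |α - β|⁻¹ * (A * B)) ^ w *
      (ENNReal.ofReal |α|⁻¹ * A) ^ e * (ENNReal.ofReal |β|⁻¹ * B) ^ f' * CC ^ g' =
      ENNReal.ofReal Creal * (A ^ r₁ * B ^ r₂ * CC ^ r₀) := by
    rw [collect_bound A B CC (ENNReal.ofReal |α|⁻¹) (ENNReal.ofReal |β|⁻¹)
      (ENNReal.ofReal |α - β|⁻¹) u v w e f' g' r₁ r₂ r₀ hu hv hw he hf'0 hg'0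
      h₁sum h₂sum h₀sum, hConst]
  -- measurability of the inner lintegral
  have hImeas : Measurable fun x : ℝ => ∫⁻ t, F (x - α * t) * G (x - β * t) * W t :=
    Measurable.lintegral_prod_right'
      (((hFmeas.comp (measurable_fst.sub (measurable_snd.const_mul α))).mul
        (hGmeas.comp (measurable_fst.sub (measurable_snd.const_mul β)))).mul
        (hWmeas.comp measurable_snd))
  set M : ℝ≥0∞ := m₁ * m₂ * m₀ with hMdef
  -- step A
  have stepA : ∀ᵐ x ∂(volume : Measure ℝ),
      (‖∫ t : ℝ, f (x - α * t) * g (x - β * t) * K t‖₊ : ℝ≥0∞) ≤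
        M * ∫⁻ t, F (x - α * t) * G (x - β * t) * W t := by
    have hae := Measure.ae_ae_of_ae_prod
      (((ae_shear_pred hbd₁ α).and (ae_shear_pred hbd₂ β)).and (ae_snd_pred hbd₀))
    filter_upwards [hae] with x hx
    calc (‖∫ t : ℝ, f (x - α * t) * g (x - β * t) * K t‖₊ : ℝ≥0∞)
        ≤ ∫⁻ t, (‖f (x - α * t) * g (x - β * t) * K t‖₊ : ℝ≥0∞) :=
          enorm_integral_le_lintegral_enorm _
      _ ≤ ∫⁻ t, (m₁ * F (x - α * t)) * (m₂ * G (x - β * t)) * (m₀ * W t) := by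
          refine lintegral_mono_ae ?_
          filter_upwards [hx] with t ht
          obtain ⟨⟨h1, h2⟩, h3⟩ := ht
          rw [nnnorm_mul, nnnorm_mul, ENNReal.coe_mul, ENNReal.coe_mul]
          exact mul_le_mul' (mul_le_mul' h1 h2) h3
      _ = ∫⁻ t, M * (F (x - α * t) * G (x - β * t) * W t) :=
          lintegral_congr fun t => by rw [hMdef]; ring
      _ = M * ∫⁻ t, F (x - α * t) * G (x - β * t) * W t :=
          lintegral_const_mul M
            (((hFmeas.comp' ((measurable_id.const_mul α).const_sub x)).mul
              (hGmeas.comp' ((measurable_id.const_mul β).const_sub x))).mul hWmeas)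
  by_cases hptop : p₃ = ∞
  · -- p₃ = ∞
    have hr₃0 : r₃ = 0 := by rw [hr₃def, hptop]; simp
    have hu0 : u = 0 := by linarith
    have hv0 : v = 0 := by linarith
    have hw0 : w = 0 := by linarith
    have hid3 : ∀ x t : ℝ, F (x - α * t) * G (x - β * t) * W t =
        (F (x - α * t) ^ q₁) ^ e * (G (x - β * t) ^ q₂) ^ f' * (W t ^ q₀) ^ g' := by
      intro x t
      have h := hid x t
      rwa [hu0, hv0, hw0, ENNReal.rpow_zero, ENNReal.rpow_zero, ENNReal.rpow_zero,
        one_mul, one_mul, one_mul] at h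
    have hMT := master_top α β F G W hFmeas hGmeas hWmeas q₁ q₂ q₀ e f' g' he hf'0 hg'0
      (by linarith) s₁ s₂ CC hs₁ hs₂ hs₃ hid3
    rw [hptop, eLpNorm_exponent_top]
    have hbound : ∀ᵐ x ∂(volume : Measure ℝ),
        (‖∫ t : ℝ, f (x - α * t) * g (x - β * t) * K t‖₊ : ℝ≥0∞) ≤
          M * (s₁ ^ e * s₂ ^ f' * CC ^ g') := by
      filter_upwards [stepA] with x hx
      exact hx.trans (mul_le_mul_right (hMT x) M)
    refine (essSup_le_of_ae_le _ hbound).trans (le_of_eq ?_)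
    have hTT : s₁ ^ e * s₂ ^ f' * CC ^ g' =
        ENNReal.ofReal Creal * (A ^ r₁ * B ^ r₂ * CC ^ r₀) := by
      rw [← hT, hu0, hv0, hw0, ENNReal.rpow_zero, ENNReal.rpow_zero, ENNReal.rpow_zero,
        one_mul, one_mul, one_mul]
    rw [hTT, ← hcol₁, ← hcol₂, ← hcol₀, hMdef]
    ring
  · -- p₃ < ∞
    set q₃ : ℝ := p₃.toReal with hq₃def
    have hq₃pos : 0 < q₃ := ENNReal.toReal_pos hp₃0 hptop
    have huvwq : (u + v + w) * q₃ = 1 := by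
      rw [huvw, hr₃def, ENNReal.toReal_inv, hq₃def, inv_mul_cancel₀ hq₃pos.ne']
    have hMF := master_fin α β F G W hFmeas hGmeas hWmeas q₁ q₂ q₀ q₃ hq₃pos
      u v w e f' g' hu hv hw he hf'0 hg'0 hsum6 huvwq s₁ s₂ CC hs₁ hs₂ hs₃ hid
    rw [hD₁, hD₂, hD₃] at hMF
    simp only [eLpNorm_eq_lintegral_rpow_enorm_toReal hp₃0 hptop, enorm_eq_nnnorm, ← hq₃def]
    calc (∫⁻ x, (‖∫ t : ℝ, f (x - α * t) * g (x - β * t) * K t‖₊ : ℝ≥0∞) ^ q₃) ^ (1 / q₃)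
        ≤ (∫⁻ x, (M * ∫⁻ t, F (x - α * t) * G (x - β * t) * W t) ^ q₃) ^ (1 / q₃) := by
          refine ENNReal.rpow_le_rpow (lintegral_mono_ae ?_) (by positivity)
          filter_upwards [stepA] with x hx
          exact ENNReal.rpow_le_rpow hx hq₃pos.le
      _ = M * (∫⁻ x, (∫⁻ t, F (x - α * t) * G (x - β * t) * W t) ^ q₃) ^ (1 / q₃) := by
          rw [show (∫⁻ x, (M * ∫⁻ t, F (x - α * t) * G (x - β * t) * W t) ^ q₃) =
              ∫⁻ x, M ^ q₃ * (∫⁻ t, F (x - α * t) * G (x - β * t) * W t) ^ q₃ from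
            lintegral_congr fun x => ENNReal.mul_rpow_of_nonneg _ _ hq₃pos.le,
            lintegral_const_mul (M ^ q₃) (hImeas.pow_const q₃),
            ENNReal.mul_rpow_of_nonneg _ _ (by positivity : (0:ℝ) ≤ 1 / q₃),
            ← ENNReal.rpow_mul M, mul_one_div, div_self hq₃pos.ne', ENNReal.rpow_one]
      _ ≤ M * ((A * CC) ^ u * (B * CC) ^ v * (ENNReal.ofReal |α - β|⁻¹ * (A * B)) ^ w *
            s₁ ^ e * s₂ ^ f' * CC ^ g') := mul_le_mul_right hMF M
      _ = ENNReal.ofReal Creal * eLpNorm K p₀ volume * eLpNorm f p₁ volume *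
            eLpNorm g p₂ volume := by
          rw [hs₁def, hs₂def]
          rw [show (A * CC) ^ u * (B * CC) ^ v * (ENNReal.ofReal |α - β|⁻¹ * (A * B)) ^ w *
              (ENNReal.ofReal |α|⁻¹ * A) ^ e * (ENNReal.ofReal |β|⁻¹ * B) ^ f' * CC ^ g' =
              ENNReal.ofReal Creal * (A ^ r₁ * B ^ r₂ * CC ^ r₀) from hT]
          rw [← hcol₁, ← hcol₂, ← hcol₀, hMdef]
          ring
end

section
/- Let K be an integrable function on ℝ, α ∈ ℝ, and f, g, h Schwartz functions with h integrable. Then ∫ h(x) H_{K,α}(f,g)(x) dx = ∫ H_{D₋₁K, 1-α}(h,g)(y) f(y) dy, where H_{K,α}(f,g)(x) = ∫ f(x-t)g(x-αt)K(t)dt and D₋₁K(t) = K(-t). -/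
open MeasureTheory SchwartzMap

/-- duality: for integrable `K`, `α ∈ ℝ`, Schwartz `f, g, h` with
`h` integrable,
`∫ h(x) H_{K,α}(f,g)(x) dx = ∫ H_{D₋₁K,1-α}(h,g)(y) f(y) dy`, where
`H_{K,α}(f,g)(x) = ∫ f(x-t)g(x-αt)K(t)dt` and `D₋₁K(t) = K(-t)`. -/
theorem bht_duality
    (K : ℝ → ℂ) (hK : Integrable K volume) (α : ℝ) (f g h : 𝓢(ℝ, ℂ))
    (hh : Integrable (fun x : ℝ => h x) volume) :
    ∫ x : ℝ, h x * ∫ t : ℝ, f (x - t) * g (x - α * t) * K t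
      = ∫ y : ℝ, (∫ t : ℝ, h (y - t) * g (y - (1 - α) * t) * K (-t)) * f y := by
  have hf : Integrable (fun x : ℝ => f x) volume := f.integrable
  set Cf := SchwartzMap.seminorm ℝ 0 0 f with hCf
  set Cg := SchwartzMap.seminorm ℝ 0 0 g with hCg
  set Ch := SchwartzMap.seminorm ℝ 0 0 h with hCh
  have hfB : ∀ x : ℝ, ‖f x‖ ≤ Cf := fun x => norm_le_seminorm ℝ f x
  have hgB : ∀ x : ℝ, ‖g x‖ ≤ Cg := fun x => norm_le_seminorm ℝ g x
  have hhB : ∀ x : ℝ, ‖h x‖ ≤ Ch := fun x => norm_le_seminorm ℝ h x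
  have hCf0 : 0 ≤ Cf := le_trans (norm_nonneg _) (hfB 0)
  have hCg0 : 0 ≤ Cg := le_trans (norm_nonneg _) (hgB 0)
  have hCh0 : 0 ≤ Ch := le_trans (norm_nonneg _) (hhB 0)
  -- integrability of the first double integrand
  have hmeas1 : AEStronglyMeasurable
      (fun p : ℝ × ℝ => h p.1 * (f (p.1 - p.2) * g (p.1 - α * p.2) * K p.2))
      (volume.prod volume) := by
    exact ((h.continuous.comp continuous_fst).aestronglyMeasurable.mul
      (((f.continuous.comp (continuous_fst.sub continuous_snd)).aestronglyMeasurable.mul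
        (g.continuous.comp (continuous_fst.sub
          (continuous_const.mul continuous_snd))).aestronglyMeasurable).mul
        hK.aestronglyMeasurable.comp_snd))
  have hint1 : Integrable
      (fun p : ℝ × ℝ => h p.1 * (f (p.1 - p.2) * g (p.1 - α * p.2) * K p.2))
      (volume.prod volume) := by
    have hbase : Integrable (fun p : ℝ × ℝ => (Cf * Cg) * (‖h p.1‖ * ‖K p.2‖))
        (volume.prod volume) := (hh.norm.mul_prod hK.norm).const_mul _
    refine hbase.mono' hmeas1 ?_
    filter_upwards with p
    calc ‖h p.1 * (f (p.1 - p.2) * g (p.1 - α * p.2) * K p.2)‖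
        = ‖h p.1‖ * (‖f (p.1 - p.2)‖ * ‖g (p.1 - α * p.2)‖ * ‖K p.2‖) := by
          simp [norm_mul]
      _ ≤ ‖h p.1‖ * (Cf * Cg * ‖K p.2‖) := by
          gcongr
          · exact hfB _
          · exact hgB _
      _ = Cf * Cg * (‖h p.1‖ * ‖K p.2‖) := by ring
  -- integrability of the second double integrand (in (t, y) order)
  have hmeas2 : AEStronglyMeasurable
      (fun p : ℝ × ℝ => h (p.2 + p.1) * g (p.2 + (1 - α) * p.1) * K p.1 * f p.2)
      (volume.prod volume) := by
    exact (((h.continuous.comp (continuous_snd.add continuous_fst)).aestronglyMeasurable.mul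
      (g.continuous.comp (continuous_snd.add
        (continuous_const.mul continuous_fst))).aestronglyMeasurable).mul
      hK.aestronglyMeasurable.comp_fst).mul
      (f.continuous.comp continuous_snd).aestronglyMeasurable
  have hint2 : Integrable
      (fun p : ℝ × ℝ => h (p.2 + p.1) * g (p.2 + (1 - α) * p.1) * K p.1 * f p.2)
      (volume.prod volume) := by
    have hbase : Integrable (fun p : ℝ × ℝ => (Ch * Cg) * (‖K p.1‖ * ‖f p.2‖))
        (volume.prod volume) := (hK.norm.mul_prod hf.norm).const_mul _
    refine hbase.mono' hmeas2 ?_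
    filter_upwards with p
    calc ‖h (p.2 + p.1) * g (p.2 + (1 - α) * p.1) * K p.1 * f p.2‖
        = ‖h (p.2 + p.1)‖ * ‖g (p.2 + (1 - α) * p.1)‖ * ‖K p.1‖ * ‖f p.2‖ := by
          simp [norm_mul]
      _ ≤ Ch * Cg * ‖K p.1‖ * ‖f p.2‖ := by
          gcongr
          · exact hhB _
          · exact hgB _
      _ = Ch * Cg * (‖K p.1‖ * ‖f p.2‖) := by ring
  calc
    ∫ x : ℝ, h x * ∫ t : ℝ, f (x - t) * g (x - α * t) * K t
      = ∫ x : ℝ, ∫ t : ℝ, h x * (f (x - t) * g (x - α * t) * K t) := by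
        simp_rw [integral_const_mul]
    _ = ∫ t : ℝ, ∫ x : ℝ, h x * (f (x - t) * g (x - α * t) * K t) := by
        exact integral_integral_swap hint1
    _ = ∫ t : ℝ, ∫ y : ℝ, h (y + t) * g (y + (1 - α) * t) * K t * f y := by
        refine integral_congr_ae (Filter.Eventually.of_forall fun t => ?_)
        dsimp only
        rw [← integral_add_right_eq_self
          (fun x => h x * (f (x - t) * g (x - α * t) * K t)) t]
        refine integral_congr_ae (Filter.Eventually.of_forall fun y => ?_)
        dsimp only
        have e1 : y + t - t = y := by ring
        have e2 : y + t - α * t = y + (1 - α) * t := by ring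
        rw [e1, e2]; ring
    _ = ∫ y : ℝ, ∫ t : ℝ, h (y + t) * g (y + (1 - α) * t) * K t * f y := by
        exact integral_integral_swap hint2
    _ = ∫ y : ℝ, (∫ t : ℝ, h (y - t) * g (y - (1 - α) * t) * K (-t)) * f y := by
        refine integral_congr_ae (Filter.Eventually.of_forall fun y => ?_)
        dsimp only
        rw [← integral_mul_const]
        rw [← integral_neg_eq_self
          (fun t => h (y - t) * g (y - (1 - α) * t) * K (-t) * f y)]
        refine integral_congr_ae (Filter.Eventually.of_forall fun t => ?_)
        dsimp only
        simp only [sub_neg_eq_add, neg_neg]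
        have e2 : y - (1 - α) * -t = y + (1 - α) * t := by ring
        rw [e2]
end
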